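/- For words u, v over an alphabet with distinct letters a and b, if u·a·b·v = v·a·b·u and |u| > |v| > 0, then |u| ≥ |v| + 2. -/

import Mathlib

theorem stmt_1 {A : Type*} (a b : A) (hab : a ≠ b) (u v : List A)
    (heq : u ++ [a, b] ++ v = v ++ [a, b] ++ u)
    (h1 : v.length < u.length) (h2 : 0 < v.length) :
    v.length + 2 ≤ u.length := by
  by_contra h
  have hlen : u.length = v.length + 1 := by omega
  rw [List.append_assoc, List.append_assoc] at heq
  have := congrArg (fun l => l[v.length + 1]?) heq
  rw [List.getElem?_append_right (l₁ := u) (by omega), List.getElem?_append_right (l₁ := v) (by omega)] at this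
  rw [hlen] at this
  simp at this
  exact hab this
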